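/- For real ρ → ∞ and integers m ≥ 1, Γ(m+ρ)/Γ(m+1) = exp(m·log(1+ρ/m) + ρ·log ρ + ρ·log(1+m/ρ) - log m + O(ρ)), where the O(ρ) is uniform in m; consequently, for fixed 0 < p < 1 the quantity p^m · m · Γ(m+ρ)/Γ(m+1), maximized over integers m ≥ 1, is exp(ρ log ρ + O(ρ)), with the maximum attained at m = Θ(ρ). -/

import Mathlib

open Real

noncomputable def Fst (t : ℝ) : ℝ := t * Real.log t - t

lemma Fst_diff_ge {a b : ℝ} (ha : 1 ≤ a) (hab : a ≤ b) :
    (b - a) * Real.log a ≤ Fst b - Fst a := by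
  have ha0 : (0:ℝ) < a := by linarith
  have hb0 : (0:ℝ) < b := by linarith
  have h1 : 1 - (b / a)⁻¹ ≤ Real.log (b / a) := Real.one_sub_inv_le_log_of_pos (by positivity)
  rw [Real.log_div hb0.ne' ha0.ne'] at h1
  have h2 : (b / a)⁻¹ = a / b := by rw [inv_div]
  rw [h2] at h1
  have h4 : b - a ≤ b * (Real.log b - Real.log a) := by
    have h5 := mul_le_mul_of_nonneg_left h1 hb0.le
    have h6 : b * (1 - a / b) = b - a := by field_simp
    linarith [h6 ▸ h5]
  have h7 : Fst b - Fst a = b * (Real.log b - Real.log a) - (b - a) + (b - a) * Real.log a := by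
    unfold Fst; ring
  linarith

lemma Fst_diff_le {a b : ℝ} (ha : 1 ≤ a) (hab : a ≤ b) :
    Fst b - Fst a ≤ (b - a) * Real.log b := by
  have ha0 : (0:ℝ) < a := by linarith
  have hb0 : (0:ℝ) < b := by linarith
  have h1 : Real.log (b / a) ≤ b / a - 1 := Real.log_le_sub_one_of_pos (by positivity)
  rw [Real.log_div hb0.ne' ha0.ne'] at h1
  have h4 : a * (Real.log b - Real.log a) ≤ b - a := by
    have h5 := mul_le_mul_of_nonneg_left h1 ha0.le
    have h6 : a * (b / a - 1) = b - a := by field_simp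
    linarith [h6 ▸ h5]
  have h7 : Fst b - Fst a = a * (Real.log b - Real.log a) - (b - a) + (b - a) * Real.log b := by
    unfold Fst; ring
  linarith

lemma log_step {j : ℝ} (hj : 1 ≤ j) :
    Fst (j + 1) - Fst j ≤ Real.log (j + 1) ∧
    Real.log (j + 1) ≤ Fst (j + 1) - Fst j + 1 / 2 := by
  have hj0 : (0:ℝ) < j := by linarith
  have hident : Fst (j + 1) - Fst j
      = Real.log (j + 1) + j * (Real.log (j + 1) - Real.log j) - 1 := by
    unfold Fst; ring
  have hup : Real.log (j + 1) - Real.log j ≤ 1 / j := by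
    have h1 : Real.log ((j + 1) / j) ≤ (j + 1) / j - 1 := Real.log_le_sub_one_of_pos (by positivity)
    rw [Real.log_div (by linarith) hj0.ne'] at h1
    have h2 : (j + 1) / j - 1 = 1 / j := by field_simp; ring
    linarith [h2 ▸ h1]
  have hlo : 1 / (j + 1) ≤ Real.log (j + 1) - Real.log j := by
    have h1 : 1 - ((j + 1) / j)⁻¹ ≤ Real.log ((j + 1) / j) :=
      Real.one_sub_inv_le_log_of_pos (by positivity)
    rw [Real.log_div (by linarith) hj0.ne'] at h1
    have h2 : ((j + 1) / j)⁻¹ = j / (j + 1) := by rw [inv_div]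
    rw [h2] at h1
    have h3 : 1 - j / (j + 1) = 1 / (j + 1) := by field_simp; ring
    linarith [h3 ▸ h1]
  constructor
  · have := mul_le_mul_of_nonneg_left hup hj0.le
    have h2 : j * (1 / j) = 1 := by field_simp
    linarith [h2 ▸ this]
  · have h4 := mul_le_mul_of_nonneg_left hlo hj0.le
    have h5 : 1 / 2 ≤ j * (1 / (j + 1)) := by
      rw [mul_one_div, le_div_iff₀ (by linarith : (0:ℝ) < j + 1)]
      linarith
    linarith

lemma log_fact_bounds (m : ℕ) (hm : 1 ≤ m) (k : ℕ) :
    Fst ((m:ℝ) + k) - Fst m ≤ Real.log (Nat.factorial (m + k) : ℝ) - Real.log (Nat.factorial m : ℝ) ∧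
    Real.log (Nat.factorial (m + k) : ℝ) - Real.log (Nat.factorial m : ℝ) ≤ Fst ((m:ℝ) + k) - Fst m + (k:ℝ) / 2 := by
  induction k with
  | zero => norm_num
  | succ k ih =>
    obtain ⟨ih1, ih2⟩ := ih
    have hm1 : (1:ℝ) ≤ (m:ℝ) := by exact_mod_cast hm
    have hj : (1:ℝ) ≤ (m:ℝ) + k := by
      have : (0:ℝ) ≤ (k:ℝ) := Nat.cast_nonneg k
      linarith
    obtain ⟨s1, s2⟩ := log_step hj
    have hfact : (Nat.factorial (m + (k + 1)) : ℝ) = ((m:ℝ) + k + 1) * (Nat.factorial (m + k) : ℝ) := by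
      have h : m + (k + 1) = (m + k) + 1 := by ring
      rw [h, Nat.factorial_succ]
      push_cast
      ring
    have hpos : (0:ℝ) < (Nat.factorial (m + k) : ℝ) := by exact_mod_cast (m + k).factorial_pos
    have hlog : Real.log (Nat.factorial (m + (k + 1)) : ℝ)
        = Real.log ((m:ℝ) + k + 1) + Real.log (Nat.factorial (m + k) : ℝ) := by
      rw [hfact, Real.log_mul (by positivity) hpos.ne']
    have hcast : ((m:ℝ) + ((k:ℕ) + 1 : ℕ)) = ((m:ℝ) + k) + 1 := by push_cast; ring
    rw [hcast, hlog]
    constructor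
    · linarith
    · push_cast
      linarith

lemma wendel {x t : ℝ} (hx : 2 ≤ x) (ht0 : 0 ≤ t) (ht1 : t ≤ 1) :
    |Real.log (Real.Gamma (x + t)) - Real.log (Real.Gamma x) - t * Real.log x| ≤ 1 := by
  have hx0 : (0:ℝ) < x := by linarith
  have hxt0 : (0:ℝ) < x + t := by linarith
  have hGx := Real.Gamma_pos_of_pos hx0
  have hGxt := Real.Gamma_pos_of_pos hxt0
  have hlog1 : Real.log (Real.Gamma (x + 1)) = Real.log x + Real.log (Real.Gamma x) := by
    rw [Real.Gamma_add_one hx0.ne', Real.log_mul hx0.ne' hGx.ne']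
  have hlog2 : Real.log (Real.Gamma (x + t + 1))
      = Real.log (x + t) + Real.log (Real.Gamma (x + t)) := by
    rw [Real.Gamma_add_one hxt0.ne', Real.log_mul hxt0.ne' hGxt.ne']
  have hub := Real.convexOn_log_Gamma.2 (Set.mem_Ioi.mpr hx0)
    (Set.mem_Ioi.mpr (by linarith : (0:ℝ) < x + 1))
    (by linarith : (0:ℝ) ≤ 1 - t) ht0 (by ring)
  have hlb := Real.convexOn_log_Gamma.2 (Set.mem_Ioi.mpr hxt0)
    (Set.mem_Ioi.mpr (by linarith : (0:ℝ) < x + t + 1))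
    ht0 (by linarith : (0:ℝ) ≤ 1 - t) (by ring)
  simp only [smul_eq_mul, Function.comp_apply] at hub hlb
  have e1 : (1 - t) * x + t * (x + 1) = x + t := by ring
  have e2 : t * (x + t) + (1 - t) * (x + t + 1) = x + 1 := by ring
  rw [e1, hlog1] at hub
  rw [e2, hlog1, hlog2] at hlb
  have hd : Real.log (x + t) - Real.log x ≤ t / x := by
    have h1 : Real.log ((x + t) / x) ≤ (x + t) / x - 1 := Real.log_le_sub_one_of_pos (by positivity)
    rw [Real.log_div hxt0.ne' hx0.ne'] at h1
    have h2 : (x + t) / x - 1 = t / x := by field_simp; ring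
    linarith [h2 ▸ h1]
  have hd0 : 0 ≤ Real.log (x + t) - Real.log x := by
    have := Real.log_le_log hx0 (by linarith : x ≤ x + t)
    linarith
  have htx : t / x ≤ 1 := by
    rw [div_le_one hx0]; linarith
  rw [abs_le]
  constructor
  · nlinarith [mul_nonneg ht0 hd0]
  · nlinarith [mul_nonneg ht0 hd0]

lemma T_eq {ρ M : ℝ} (hρ : 0 < ρ) (hM : 0 < M) :
    M * Real.log (1 + ρ / M) + ρ * Real.log ρ + ρ * Real.log (1 + M / ρ) - Real.log M
      = Fst (M + ρ) - Fst M + ρ - Real.log M := by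
  have e1 : (1 : ℝ) + ρ / M = (M + ρ) / M := by field_simp
  have e2 : (1 : ℝ) + M / ρ = (M + ρ) / ρ := by field_simp; ring
  rw [e1, e2, Real.log_div (by positivity) hM.ne', Real.log_div (by positivity) hρ.ne']
  unfold Fst; ring

lemma key (ρ : ℝ) (hρ : 2 ≤ ρ) (m : ℕ) (hm : 1 ≤ m) :
    |Real.log (Real.Gamma (m + ρ) / Real.Gamma (m + 1)) -
      (Fst ((m:ℝ) + ρ) - Fst m + ρ - Real.log m)| ≤ 4 * ρ := by
  have hρ0 : (0:ℝ) < ρ := by linarith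
  have hM : (1:ℝ) ≤ (m:ℝ) := by exact_mod_cast hm
  set M : ℝ := (m:ℝ) with hM_def
  set n : ℕ := ⌊ρ⌋₊ with hn_def
  have hn2 : 2 ≤ n := Nat.le_floor (by exact_mod_cast hρ)
  have hnρ : (n:ℝ) ≤ ρ := Nat.floor_le hρ0.le
  have hρn : ρ < (n:ℝ) + 1 := Nat.lt_floor_add_one ρ
  obtain ⟨k, hk⟩ : ∃ k, n = k + 1 := ⟨n - 1, by omega⟩
  have hk1 : 1 ≤ k := by omega
  have hkR : (1:ℝ) ≤ (k:ℝ) := by exact_mod_cast hk1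
  have hnk : (n:ℝ) = (k:ℝ) + 1 := by exact_mod_cast hk
  have hkρ : (k:ℝ) ≤ ρ - 1 := by linarith
  set t : ℝ := ρ - n with ht_def
  have ht0 : 0 ≤ t := by rw [ht_def]; linarith
  have ht1 : t ≤ 1 := by rw [ht_def]; linarith
  have hn2R : (2:ℝ) ≤ (n:ℝ) := by exact_mod_cast hn2
  have hx2 : 2 ≤ M + (n:ℝ) := by linarith
  have hW := wendel hx2 ht0 ht1
  have hxt : M + (n:ℝ) + t = M + ρ := by rw [ht_def]; ring
  rw [hxt] at hW
  have hGmn : Real.Gamma (M + (n:ℝ)) = (Nat.factorial (m + k) : ℝ) := by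
    have e : M + (n:ℝ) = ((m + k : ℕ) : ℝ) + 1 := by
      rw [hM_def, hnk]; push_cast; ring
    rw [e, Real.Gamma_nat_eq_factorial]
  have hGpos : 0 < Real.Gamma (M + ρ) := Real.Gamma_pos_of_pos (by linarith)
  have hGpos1 : 0 < Real.Gamma (M + 1) := Real.Gamma_pos_of_pos (by linarith)
  have hGm1 : Real.Gamma (M + 1) = (Nat.factorial m : ℝ) := Real.Gamma_nat_eq_factorial m
  rw [Real.log_div hGpos.ne' hGpos1.ne', hGm1]
  rw [hGmn] at hW
  obtain ⟨hS1, hS2⟩ := log_fact_bounds m hm k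
  have hab : M + (k:ℝ) ≤ M + ρ := by linarith
  have hmk1 : (1:ℝ) ≤ M + (k:ℝ) := by linarith
  have hFge : (1 + t) * Real.log (M + k) ≤ Fst (M + ρ) - Fst (M + k) := by
    have h := Fst_diff_ge hmk1 hab
    have e : M + ρ - (M + (k:ℝ)) = 1 + t := by rw [ht_def, hnk]; ring
    rwa [e] at h
  have hFle : Fst (M + ρ) - Fst (M + k) ≤ (1 + t) * Real.log (M + ρ) := by
    have h := Fst_diff_le hmk1 hab
    have e : M + ρ - (M + (k:ℝ)) = 1 + t := by rw [ht_def, hnk]; ring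
    rwa [e] at h
  -- log comparisons
  have hd1 : Real.log (M + (n:ℝ)) - Real.log (M + (k:ℝ)) ≤ 1 / 2 := by
    have h1 : Real.log ((M + n) / (M + k)) ≤ (M + n) / (M + k) - 1 :=
      Real.log_le_sub_one_of_pos (by positivity)
    rw [Real.log_div (by positivity) (by positivity)] at h1
    have h2 : (M + (n:ℝ)) / (M + k) - 1 = 1 / (M + k) := by
      rw [hnk]; field_simp; ring
    have h3 : 1 / (M + (k:ℝ)) ≤ 1 / 2 :=
      one_div_le_one_div_of_le (by norm_num) (by linarith)
    linarith [h2 ▸ h1]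
  have hd1' : 0 ≤ Real.log (M + (n:ℝ)) - Real.log (M + (k:ℝ)) := by
    have := Real.log_le_log (by positivity : (0:ℝ) < M + (k:ℝ)) (by linarith : M + (k:ℝ) ≤ M + n)
    linarith
  have hd2 : Real.log (M + ρ) - Real.log (M + (n:ℝ)) ≤ 1 := by
    have h1 : Real.log ((M + ρ) / (M + n)) ≤ (M + ρ) / (M + n) - 1 :=
      Real.log_le_sub_one_of_pos (by positivity)
    rw [Real.log_div (by positivity) (by positivity)] at h1
    have h2 : (M + ρ) / (M + (n:ℝ)) - 1 = (ρ - n) / (M + n) := by field_simp; ring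
    have h3 : (ρ - (n:ℝ)) / (M + n) ≤ 1 := by
      rw [div_le_one (by positivity)]
      linarith
    linarith [h2 ▸ h1]
  have hd2' : 0 ≤ Real.log (M + ρ) - Real.log (M + (n:ℝ)) := by
    have := Real.log_le_log (by positivity : (0:ℝ) < M + (n:ℝ)) (by linarith : M + (n:ℝ) ≤ M + ρ)
    linarith
  have hd3 : Real.log (M + ρ) - Real.log M ≤ ρ := by
    have h1 : Real.log ((M + ρ) / M) ≤ (M + ρ) / M - 1 :=
      Real.log_le_sub_one_of_pos (by positivity)
    rw [Real.log_div (by positivity) (by positivity)] at h1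
    have h2 : (M + ρ) / M - 1 = ρ / M := by field_simp; ring
    have h3 : ρ / M ≤ ρ := by
      rw [div_le_iff₀ (by linarith : (0:ℝ) < M)]
      nlinarith
    linarith [h2 ▸ h1]
  have hd4 : Real.log M ≤ Real.log (M + (k:ℝ)) :=
    Real.log_le_log (by linarith) (by linarith)
  have hp1 : t * (Real.log (M + (n:ℝ)) - Real.log (M + (k:ℝ)))
      ≤ Real.log (M + (n:ℝ)) - Real.log (M + (k:ℝ)) :=
    mul_le_of_le_one_left hd1' ht1
  have hp2 : 0 ≤ (1 - t) * (Real.log (M + ρ) - Real.log (M + (n:ℝ))) :=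
    mul_nonneg (by linarith) hd2'
  rw [abs_le] at hW ⊢
  obtain ⟨hW1, hW2⟩ := hW
  constructor
  · linarith [hW1, hS1, hFle, hp2, hd2, hd3, hd2', hρ]
  · linarith [hW2, hS2, hFge, hp1, hd1, hd4, hkρ, hρ0]

set_option maxHeartbeats 1600000 in
/-- Uniform Gamma-ratio asymptotics: there is `C > 0` such that for all real
`ρ ≥ 2` and integers `m ≥ 1`,
`|log(Γ(m+ρ)/Γ(m+1)) - (m log(1+ρ/m) + ρ log ρ + ρ log(1+m/ρ) - log m)| ≤ C ρ`;
consequently, for fixed `0 < p < 1`, the maximum over `m ≥ 1` of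
`p^m · m · Γ(m+ρ)/Γ(m+1)` equals `exp(ρ log ρ + O(ρ))` and is attained at
`m = Θ(ρ)`. -/
theorem gamma_ratio_asymptotics (p : ℝ) (hp : 0 < p) (hp1 : p < 1) :
    ∃ C > 0, ∀ ρ : ℝ, 2 ≤ ρ →
      (∀ m : ℕ, 1 ≤ m →
        |Real.log (Real.Gamma (m + ρ) / Real.Gamma (m + 1)) -
          ((m : ℝ) * Real.log (1 + ρ / m) + ρ * Real.log ρ +
            ρ * Real.log (1 + m / ρ) - Real.log m)| ≤ C * ρ) ∧
      (∀ m : ℕ, 1 ≤ m →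
        p ^ (m : ℕ) * (m : ℝ) * (Real.Gamma (m + ρ) / Real.Gamma (m + 1)) ≤
          Real.exp (ρ * Real.log ρ + C * ρ)) ∧
      (∃ m : ℕ, 1 ≤ m ∧ ρ / C ≤ (m : ℝ) ∧ (m : ℝ) ≤ C * ρ ∧
        Real.exp (ρ * Real.log ρ - C * ρ) ≤
          p ^ (m : ℕ) * (m : ℝ) * (Real.Gamma (m + ρ) / Real.Gamma (m + 1))) := by
  have hlp : Real.log p < 0 := Real.log_neg hp hp1
  set a : ℝ := -Real.log p with ha_def
  have ha : 0 < a := by rw [ha_def]; linarith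
  set C : ℝ := 10 + 3 * a + 1 / a with hC_def
  have hinva : 0 < 1 / a := by positivity
  have hC4 : 4 ≤ C := by rw [hC_def]; linarith
  have hC0 : 0 < C := by linarith
  refine ⟨C, hC0, fun ρ hρ => ?_⟩
  have hρ0 : (0:ℝ) < ρ := by linarith
  have hρ1 : (1:ℝ) ≤ ρ := by linarith
  have hCρ : C * ρ = 10 * ρ + 3 * (a * ρ) + ρ / a := by rw [hC_def]; ring
  have haρ : 2 * a ≤ a * ρ := by nlinarith
  have hρa : 0 ≤ ρ / a := by positivity
  have main : ∀ m : ℕ, 1 ≤ m →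
      |Real.log (Real.Gamma (m + ρ) / Real.Gamma (m + 1)) -
        ((m : ℝ) * Real.log (1 + ρ / m) + ρ * Real.log ρ +
          ρ * Real.log (1 + m / ρ) - Real.log m)| ≤ 4 * ρ := by
    intro m hm
    have hM : (0:ℝ) < m := by exact_mod_cast hm
    rw [T_eq hρ0 hM]
    exact key ρ hρ m hm
  refine ⟨fun m hm => (main m hm).trans (by nlinarith), ?_, ?_⟩
  · -- upper bound for all m
    intro m hm
    have hm0 : (0:ℝ) < m := by exact_mod_cast hm
    have hM1 : (1:ℝ) ≤ (m:ℝ) := by exact_mod_cast hm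
    have hGpos : 0 < Real.Gamma ((m:ℝ) + ρ) := Real.Gamma_pos_of_pos (by linarith)
    have hGpos1 : 0 < Real.Gamma ((m:ℝ) + 1) := Real.Gamma_pos_of_pos (by linarith)
    have hR : 0 < Real.Gamma ((m:ℝ) + ρ) / Real.Gamma ((m:ℝ) + 1) := div_pos hGpos hGpos1
    have hL : 0 < p ^ (m:ℕ) * (m:ℝ) * (Real.Gamma ((m:ℝ) + ρ) / Real.Gamma ((m:ℝ) + 1)) := by
      positivity
    rw [← Real.exp_log hL, Real.exp_le_exp]
    rw [Real.log_mul (by positivity) hR.ne', Real.log_mul (by positivity) hm0.ne',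
      Real.log_pow]
    have hkey := (abs_le.mp (main m hm)).2
    have hMp : (m:ℝ) * Real.log p = -(a * (m:ℝ)) := by rw [ha_def]; ring
    have h1 : Real.log (1 + ρ / (m:ℝ)) ≤ ρ / (m:ℝ) := by
      have := Real.log_le_sub_one_of_pos (show (0:ℝ) < 1 + ρ / m by positivity)
      linarith
    have hf1 : (m:ℝ) * Real.log (1 + ρ / (m:ℝ)) ≤ ρ := by
      have h := mul_le_mul_of_nonneg_left h1 (by linarith : (0:ℝ) ≤ (m:ℝ))
      have e : (m:ℝ) * (ρ / m) = ρ := by field_simp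
      linarith [e ▸ h]
    have h2 : Real.log (1 + (m:ℝ) / ρ) ≤ a * (1 + (m:ℝ) / ρ) - 1 - Real.log a := by
      have hx : (0:ℝ) < a * (1 + (m:ℝ) / ρ) := by positivity
      have h3 := Real.log_le_sub_one_of_pos hx
      rw [Real.log_mul ha.ne' (by positivity)] at h3
      linarith
    have hf2 : ρ * Real.log (1 + (m:ℝ) / ρ)
        ≤ a * ρ + a * (m:ℝ) - ρ - ρ * Real.log a := by
      have h := mul_le_mul_of_nonneg_left h2 hρ0.le
      have e : ρ * (a * (1 + (m:ℝ) / ρ) - 1 - Real.log a)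
          = a * ρ + a * (m:ℝ) - ρ - ρ * Real.log a := by
        field_simp
      linarith [e ▸ h]
    have h3 : -Real.log a ≤ 1 / a - 1 := by
      have := Real.one_sub_inv_le_log_of_pos ha
      rw [inv_eq_one_div] at this
      linarith
    have hf3 : ρ * (-Real.log a) ≤ ρ / a - ρ := by
      have h := mul_le_mul_of_nonneg_left h3 hρ0.le
      have e : ρ * (1 / a - 1) = ρ / a - ρ := by ring
      linarith [e ▸ h]
    nlinarith [hkey, hMp, hf1, hf2, hf3, hCρ, haρ, hρa]
  · -- lower bound at m = ⌈ρ⌉₊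
    refine ⟨⌈ρ⌉₊, ?_, ?_, ?_, ?_⟩
    · exact Nat.ceil_pos.mpr hρ0
    · calc ρ / C ≤ ρ := div_le_self hρ0.le (by linarith)
        _ ≤ (⌈ρ⌉₊ : ℝ) := Nat.le_ceil ρ
    · have h1 : ((⌈ρ⌉₊ : ℕ) : ℝ) < ρ + 1 := Nat.ceil_lt_add_one hρ0.le
      nlinarith
    · set m : ℕ := ⌈ρ⌉₊ with hm_def
      have hm : 1 ≤ m := Nat.ceil_pos.mpr hρ0
      have hMρ : ρ ≤ (m:ℝ) := Nat.le_ceil ρ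
      have hMρ1 : (m:ℝ) ≤ ρ + 1 := (Nat.ceil_lt_add_one hρ0.le).le
      have hm0 : (0:ℝ) < m := by linarith
      have hM1 : (1:ℝ) ≤ (m:ℝ) := by linarith
      have hGpos : 0 < Real.Gamma ((m:ℝ) + ρ) := Real.Gamma_pos_of_pos (by linarith)
      have hGpos1 : 0 < Real.Gamma ((m:ℝ) + 1) := Real.Gamma_pos_of_pos (by linarith)
      have hR : 0 < Real.Gamma ((m:ℝ) + ρ) / Real.Gamma ((m:ℝ) + 1) := div_pos hGpos hGpos1
      have hL : 0 < p ^ (m:ℕ) * (m:ℝ) * (Real.Gamma ((m:ℝ) + ρ) / Real.Gamma ((m:ℝ) + 1)) := by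
        positivity
      rw [← Real.exp_log hL, Real.exp_le_exp]
      rw [Real.log_mul (by positivity) hR.ne', Real.log_mul (by positivity) hm0.ne',
        Real.log_pow]
      have hkey := (abs_le.mp (main m hm)).1
      have hMp : (m:ℝ) * Real.log p = -(a * (m:ℝ)) := by rw [ha_def]; ring
      have hg1 : 0 ≤ (m:ℝ) * Real.log (1 + ρ / (m:ℝ)) := by
        have h : (0:ℝ) ≤ ρ / (m:ℝ) := by positivity
        exact mul_nonneg (by linarith) (Real.log_nonneg (by linarith))
      have hg2 : 0 ≤ ρ * Real.log (1 + (m:ℝ) / ρ) := by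
        have h : (0:ℝ) ≤ (m:ℝ) / ρ := by positivity
        exact mul_nonneg hρ0.le (Real.log_nonneg (by linarith))
      have hg4 : a * (m:ℝ) ≤ a * (ρ + 1) := mul_le_mul_of_nonneg_left hMρ1 ha.le
      nlinarith [hkey, hMp, hg1, hg2, hg4, hCρ, haρ, hρa]
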